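/- arXiv:2103.05816 — 4 statements merged into one kernel-verified Lean document; each statement's English description precedes it below -/
import Mathlib

section
/- If G is a graph containing a triangle, and G has a proper coloring using χ(G) colors in which at least one color class has size at least 3, then B(G) ≥ 4. -/
open Finset

variable {V : Type*}

/-- A proper coloring given as a function to ℕ. -/
def IsProperColoring (G : SimpleGraph V) (c : V → ℕ) : Prop :=
  ∀ ⦃u v⦄, G.Adj u v → c u ≠ c v

variable [Fintype V] [DecidableEq V]

/-- Two colorings use every color the same number of times. -/
def SameColorCounts (c c' : V → ℕ) : Prop :=
  ∀ k : ℕ, (univ.filter fun v => c v = k).card = (univ.filter fun v => c' v = k).card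

/-- The number of vertices on which two colorings differ. -/
def recolorCount (c c' : V → ℕ) : ℕ := (univ.filter fun v => c v ≠ c' v).card

/-- The ℕ-valued chromatic number. -/
noncomputable def chromNum (G : SimpleGraph V) : ℕ := G.chromaticNumber.toNat

/-- A proper coloring of `G` using exactly `χ(G)` colors. -/
noncomputable def IsOptimalColoring (G : SimpleGraph V) (f : V → ℕ) : Prop :=
  IsProperColoring G f ∧ (univ.image f).card = chromNum G

/-- The villainy of a coloring `c`: the least number of vertices that must be
recolored to obtain a proper coloring using each color as often as `c` does. -/
noncomputable def colVillainy (G : SimpleGraph V) (c : V → ℕ) : ℕ :=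
  sInf {n | ∃ c', IsProperColoring G c' ∧ SameColorCounts c c' ∧ recolorCount c c' = n}

/-- `c` is a permutation of the coloring `f`. -/
def IsPermutationOf (c f : V → ℕ) : Prop := ∃ σ : Equiv.Perm V, c = f ∘ σ

/-- The villainy of `G`: the maximum villainy over all permutations of optimal
proper colorings of `G`. -/
noncomputable def villainy (G : SimpleGraph V) : ℕ :=
  sSup {n | ∃ f c, IsOptimalColoring G f ∧ IsPermutationOf c f ∧ colVillainy G c = n}


lemma exists_perm_mapsTo (A S : Finset V) (h : A.card ≤ S.card) :
    ∃ σ : Equiv.Perm V, ∀ v ∈ A, σ v ∈ S := by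
  obtain ⟨T, hTS, hT⟩ := Finset.exists_subset_card_eq h
  have hcompl : (Aᶜ : Finset V).card = (Tᶜ : Finset V).card := by
    rw [Finset.card_compl, Finset.card_compl, hT]
  have e1 : {x // x ∈ A} ≃ {x // x ∈ T} := Finset.equivOfCardEq hT.symm
  have e2 : {x // ¬ x ∈ A} ≃ {x // ¬ x ∈ T} :=
    ((Equiv.subtypeEquivRight (fun x => (Finset.mem_compl (s := A)).symm)).trans
      (Finset.equivOfCardEq hcompl)).trans
      (Equiv.subtypeEquivRight fun x => Finset.mem_compl)
  refine ⟨(Equiv.sumCompl (· ∈ A)).symm.trans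
    ((e1.sumCongr e2).trans (Equiv.sumCompl (· ∈ T))), ?_⟩
  intro v hv
  have h1 : (Equiv.sumCompl (· ∈ A)).symm v = Sum.inl ⟨v, hv⟩ :=
    Equiv.sumCompl_symm_apply_of_pos hv
  simp only [Equiv.trans_apply, h1, Equiv.sumCongr_apply, Sum.map_inl,
    Equiv.sumCompl_apply_inl]
  exact hTS (e1 ⟨v, hv⟩).2

lemma sameColorCounts_comp_perm (f : V → ℕ) (σ : Equiv.Perm V) :
    SameColorCounts (f ∘ σ) f := by
  intro k
  apply Finset.card_bij (fun v _ => σ v)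
  · intro v hv
    simp only [Finset.mem_filter, Finset.mem_univ, true_and] at hv ⊢
    exact hv
  · intro u hu v hv huv
    exact σ.injective huv
  · intro w hw
    refine ⟨σ.symm w, ?_, σ.apply_symm_apply w⟩
    simp only [Finset.mem_filter, Finset.mem_univ, true_and, Function.comp_apply,
      Equiv.apply_symm_apply] at hw ⊢
    exact hw

lemma sameColorCounts_of_perm {c f : V → ℕ} (h : IsPermutationOf c f) :
    SameColorCounts c f := by
  obtain ⟨σ, rfl⟩ := h
  exact sameColorCounts_comp_perm f σ

lemma card_changed_eq {c c' : V → ℕ} (h : SameColorCounts c c') (k : ℕ) :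
    (univ.filter fun v => c v = k ∧ c' v ≠ k).card =
      (univ.filter fun v => c' v = k ∧ c v ≠ k).card := by
  simp only [ne_eq]
  have key : ∀ x y : V → ℕ, (univ.filter fun v => x v = k).card =
      (univ.filter fun v => x v = k ∧ y v = k).card +
      (univ.filter fun v => x v = k ∧ ¬ y v = k).card := by
    intro x y
    rw [← Finset.filter_filter, ← Finset.filter_filter,
      Finset.card_filter_add_card_filter_not]
  have h1 := key c c'
  have h2 := key c' c
  have h3 : (univ.filter fun v => c v = k ∧ c' v = k) =
      (univ.filter fun v => c' v = k ∧ c v = k) :=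
    Finset.filter_congr (by tauto)
  rw [h3] at h1
  have := h k
  omega

lemma villainy_bddAbove (G : SimpleGraph V) :
    BddAbove {n | ∃ f c, IsOptimalColoring G f ∧ IsPermutationOf c f ∧ colVillainy G c = n} := by
  refine ⟨Fintype.card V, fun n hn => ?_⟩
  obtain ⟨f, c, hf, hperm, rfl⟩ := hn
  have hmem : recolorCount c f ∈
      {n | ∃ c', IsProperColoring G c' ∧ SameColorCounts c c' ∧ recolorCount c c' = n} :=
    ⟨f, hf.1, sameColorCounts_of_perm hperm, rfl⟩
  calc colVillainy G c ≤ recolorCount c f := Nat.sInf_le hmem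
    _ ≤ Fintype.card V := by
        simpa [recolorCount] using Finset.card_filter_le univ (fun v => c v ≠ f v)

theorem villainy_ge_four_of_triangle (G : SimpleGraph V) (a b c : V)
    (hab : G.Adj a b) (hbc : G.Adj b c) (hac : G.Adj a c)
    (f : V → ℕ) (hf : IsOptimalColoring G f)
    (k : ℕ) (hk : 3 ≤ (univ.filter fun v => f v = k).card) :
    4 ≤ villainy G := by
  have habne : a ≠ b := hab.ne
  have hbcne : b ≠ c := hbc.ne
  have hacne : a ≠ c := hac.ne
  -- build the bad coloring
  have hA : ({a, b, c} : Finset V).card ≤ (univ.filter fun v => f v = k).card := by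
    refine le_trans ?_ hk
    refine le_trans (Finset.card_insert_le _ _) ?_
    simp [Finset.card_insert_le]
    exact Nat.lt_succ_of_le (le_trans (Finset.card_insert_le _ _) (by simp))
  obtain ⟨σ, hσ⟩ := exists_perm_mapsTo {a, b, c} (univ.filter fun v => f v = k) hA
  set cb : V → ℕ := f ∘ σ with hcb
  have hkv : ∀ v ∈ ({a, b, c} : Finset V), cb v = k := by
    intro v hv
    have := hσ v hv
    simp only [Finset.mem_filter] at this
    exact this.2
  have hka : cb a = k := hkv a (by simp)
  have hkb : cb b = k := hkv b (by simp)
  have hkc : cb c = k := hkv c (by simp)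
  -- the villainy of cb is at least 4
  have hlb : ∀ n ∈ {n | ∃ c', IsProperColoring G c' ∧ SameColorCounts cb c' ∧
      recolorCount cb c' = n}, 4 ≤ n := by
    rintro n ⟨c', hc'p, hc'cnt, rfl⟩
    set X := univ.filter fun v => cb v = k ∧ c' v ≠ k with hX
    set Y := univ.filter fun v => c' v = k ∧ cb v ≠ k with hY
    have hXY : X.card = Y.card := card_changed_eq hc'cnt k
    -- two of a, b, c lie in X
    have h2X : 2 ≤ X.card := by
      have hmemX : ∀ v ∈ ({a, b, c} : Finset V), c' v ≠ k → v ∈ X := by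
        intro v hv hvk
        simp only [hX, Finset.mem_filter, Finset.mem_univ, true_and]
        exact ⟨hkv v hv, hvk⟩
      have hone : 1 < X.card := by
        rw [Finset.one_lt_card]
        by_cases ha' : c' a = k
        · have hb' : c' b ≠ k := fun h => hc'p hab (ha'.trans h.symm)
          have hc'' : c' c ≠ k := fun h => hc'p hac (ha'.trans h.symm)
          exact ⟨b, hmemX b (by simp) hb', c, hmemX c (by simp) hc'', hbcne⟩
        · by_cases hb' : c' b = k
          · have hc'' : c' c ≠ k := fun h => hc'p hbc (hb'.trans h.symm)
            exact ⟨a, hmemX a (by simp) ha', c, hmemX c (by simp) hc'', hacne⟩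
          · exact ⟨a, hmemX a (by simp) ha', b, hmemX b (by simp) hb', habne⟩
      omega
    have hdisj : Disjoint X Y := by
      rw [Finset.disjoint_left]
      intro v hvX hvY
      simp only [hX, hY, Finset.mem_filter] at hvX hvY
      exact hvY.2.2 hvX.2.1
    have hsub : X ∪ Y ⊆ univ.filter fun v => cb v ≠ c' v := by
      intro v hv
      simp only [hX, hY, Finset.mem_union, Finset.mem_filter, Finset.mem_univ, true_and] at hv ⊢
      rcases hv with h | h
      · exact fun he => h.2 (he ▸ h.1)
      · exact fun he => h.2 (he.trans h.1)
    have := Finset.card_le_card hsub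
    rw [Finset.card_union_of_disjoint hdisj] at this
    unfold recolorCount
    omega
  have hne : recolorCount cb f ∈ {n | ∃ c', IsProperColoring G c' ∧ SameColorCounts cb c' ∧
      recolorCount cb c' = n} := ⟨f, hf.1, sameColorCounts_comp_perm f σ, rfl⟩
  have h4 : 4 ≤ colVillainy G cb := le_csInf ⟨_, hne⟩ hlb
  have hmem : colVillainy G cb ∈
      {n | ∃ f c, IsOptimalColoring G f ∧ IsPermutationOf c f ∧ colVillainy G c = n} :=
    ⟨f, cb, hf, ⟨σ, rfl⟩, rfl⟩
  exact le_trans h4 (le_csSup (villainy_bddAbove G) hmem)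
end

section
/- Let G be a graph containing a triangle one of whose vertices has degree at least 3 in G. If G has a proper coloring using χ(G) colors in which at least two color classes have size at least 2, then B(G) ≥ 3. -/
open Finset

variable {V : Type*}

variable [Fintype V] [DecidableEq V]

/-- Auxiliary: if two colorings with the same color counts agree off `{p, q}` and
differ at `p`, then `c' q = c p`. -/
lemma color_swap_aux {c c' : V → ℕ} (hcc : SameColorCounts c c') {p q : V}
    (hp : c p ≠ c' p) (hoth : ∀ z, z ≠ p → z ≠ q → c z = c' z) :
    c' q = c p := by
  by_contra hq'
  have hpA : p ∈ univ.filter (fun z => c z = c p) := by simp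
  have hsub : univ.filter (fun z => c' z = c p) ⊆
      (univ.filter (fun z => c z = c p)).erase p := by
    intro z hz
    simp only [mem_filter, mem_univ, true_and] at hz
    have hzp : z ≠ p := by rintro rfl; exact hp hz.symm
    have hzq : z ≠ q := by rintro rfl; exact hq' hz
    rw [Finset.mem_erase]
    refine ⟨hzp, ?_⟩
    simp only [mem_filter, mem_univ, true_and]
    rw [hoth z hzp hzq]; exact hz
  have hle := Finset.card_le_card hsub
  rw [Finset.card_erase_of_mem hpA] at hle
  have hpos : 0 < (univ.filter (fun z => c z = c p)).card :=
    Finset.card_pos.mpr ⟨p, hpA⟩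
  have := hcc (c p)
  omega

/-- Auxiliary: a permutation with four prescribed values. -/
lemma exists_perm_four {a b c d p q r s : V}
    (hab : a ≠ b) (hac : a ≠ c) (had : a ≠ d) (hbc : b ≠ c) (hbd : b ≠ d) (hcd : c ≠ d)
    (hpq : p ≠ q) (hpr : p ≠ r) (hps : p ≠ s) (hqr : q ≠ r) (hqs : q ≠ s) (hrs : r ≠ s) :
    ∃ σ : Equiv.Perm V, σ a = p ∧ σ b = q ∧ σ c = r ∧ σ d = s := by
  set σ1 : Equiv.Perm V := Equiv.swap a p with hσ1
  have h1a : σ1 a = p := Equiv.swap_apply_left a p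
  set σ2 : Equiv.Perm V := (Equiv.swap (σ1 b) q) * σ1 with hσ2
  have h2b : σ2 b = q := by
    simp only [hσ2, Equiv.Perm.mul_apply]; exact Equiv.swap_apply_left _ _
  have h2a : σ2 a = p := by
    simp only [hσ2, Equiv.Perm.mul_apply, h1a]
    exact Equiv.swap_apply_of_ne_of_ne (by rw [← h1a]; exact σ1.injective.ne hab) hpq
  set σ3 : Equiv.Perm V := (Equiv.swap (σ2 c) r) * σ2 with hσ3
  have h3c : σ3 c = r := by
    simp only [hσ3, Equiv.Perm.mul_apply]; exact Equiv.swap_apply_left _ _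
  have h3a : σ3 a = p := by
    simp only [hσ3, Equiv.Perm.mul_apply, h2a]
    exact Equiv.swap_apply_of_ne_of_ne (by rw [← h2a]; exact σ2.injective.ne hac) hpr
  have h3b : σ3 b = q := by
    simp only [hσ3, Equiv.Perm.mul_apply, h2b]
    exact Equiv.swap_apply_of_ne_of_ne (by rw [← h2b]; exact σ2.injective.ne hbc) hqr
  set σ4 : Equiv.Perm V := (Equiv.swap (σ3 d) s) * σ3 with hσ4
  have h4d : σ4 d = s := by
    simp only [hσ4, Equiv.Perm.mul_apply]; exact Equiv.swap_apply_left _ _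
  have h4a : σ4 a = p := by
    simp only [hσ4, Equiv.Perm.mul_apply, h3a]
    exact Equiv.swap_apply_of_ne_of_ne (by rw [← h3a]; exact σ3.injective.ne had) hps
  have h4b : σ4 b = q := by
    simp only [hσ4, Equiv.Perm.mul_apply, h3b]
    exact Equiv.swap_apply_of_ne_of_ne (by rw [← h3b]; exact σ3.injective.ne hbd) hqs
  have h4c : σ4 c = r := by
    simp only [hσ4, Equiv.Perm.mul_apply, h3c]
    exact Equiv.swap_apply_of_ne_of_ne (by rw [← h3c]; exact σ3.injective.ne hcd) hrs
  exact ⟨σ4, h4a, h4b, h4c, h4d⟩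

theorem villainy_ge_three_of_triangle_deg_three (G : SimpleGraph V)
    [DecidableRel G.Adj] (u v w : V)
    (huv : G.Adj u v) (hvw : G.Adj v w) (huw : G.Adj u w)
    (hdeg : 3 ≤ G.degree v)
    (f : V → ℕ) (hf : IsOptimalColoring G f) (k₁ k₂ : ℕ) (hkk : k₁ ≠ k₂)
    (hk₁ : 2 ≤ (univ.filter fun x => f x = k₁).card)
    (hk₂ : 2 ≤ (univ.filter fun x => f x = k₂).card) :
    3 ≤ villainy G := by
  have hfp := hf.1
  -- a third neighbor x of v
  have hcard2 : ({u, w} : Finset V).card ≤ 2 := by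
    refine (Finset.card_insert_le _ _).trans ?_
    simp
  have hsd := Finset.le_card_sdiff ({u, w} : Finset V) (G.neighborFinset v)
  have hdegeq : (G.neighborFinset v).card = G.degree v := rfl
  obtain ⟨x, hxmem⟩ := Finset.card_pos.mp (by omega :
      0 < ((G.neighborFinset v) \ ({u, w} : Finset V)).card)
  rw [Finset.mem_sdiff, SimpleGraph.mem_neighborFinset] at hxmem
  obtain ⟨hvx, hxnot⟩ := hxmem
  simp only [Finset.mem_insert, Finset.mem_singleton, not_or] at hxnot
  obtain ⟨hxu, hxw⟩ := hxnot
  -- distinctness of u v w x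
  have huvne : u ≠ v := huv.ne
  have hvwne : v ≠ w := hvw.ne
  have huwne : u ≠ w := huw.ne
  have hvxne : v ≠ x := hvx.ne
  -- two elements in each big class
  obtain ⟨p₁, hp₁m, p₂, hp₂m, hp12⟩ := Finset.one_lt_card.mp (by omega :
      1 < (univ.filter fun z => f z = k₁).card)
  obtain ⟨q₁, hq₁m, q₂, hq₂m, hq12⟩ := Finset.one_lt_card.mp (by omega :
      1 < (univ.filter fun z => f z = k₂).card)
  simp only [mem_filter, mem_univ, true_and] at hp₁m hp₂m hq₁m hq₂m
  have hpq11 : p₁ ≠ q₁ := fun h => hkk (by rw [← hp₁m, h, hq₁m])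
  have hpq12 : p₁ ≠ q₂ := fun h => hkk (by rw [← hp₁m, h, hq₂m])
  have hpq21 : p₂ ≠ q₁ := fun h => hkk (by rw [← hp₂m, h, hq₁m])
  have hpq22 : p₂ ≠ q₂ := fun h => hkk (by rw [← hp₂m, h, hq₂m])
  -- the permutation σ: u ↦ p₁, v ↦ q₁, w ↦ p₂, x ↦ q₂
  obtain ⟨σ, hσu, hσv, hσw, hσx⟩ :=
    exists_perm_four (V := V) huvne huwne (Ne.symm hxu) hvwne hvxne (Ne.symm hxw)
      hpq11 hp12 hpq12 (Ne.symm hpq21) hq12 hpq22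
  set c : V → ℕ := f ∘ σ with hcdef
  have hcu : c u = k₁ := by simp [hcdef, hσu, hp₁m]
  have hcv : c v = k₂ := by simp [hcdef, hσv, hq₁m]
  have hcw : c w = k₁ := by simp [hcdef, hσw, hp₂m]
  have hcx : c x = k₂ := by simp [hcdef, hσx, hq₂m]
  have hccf : SameColorCounts c f := sameColorCounts_comp_perm f σ
  -- the key bound on the villainy of c
  have hkey : 3 ≤ colVillainy G c := by
    refine le_csInf ⟨recolorCount c f, f, hfp, hccf, rfl⟩ ?_
    rintro n ⟨c', hc'p, hcnt, rfl⟩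
    by_contra hlt
    push_neg at hlt
    set D := univ.filter (fun z => c z ≠ c' z) with hDdef
    have hmemD : ∀ z, z ∈ D ↔ c z ≠ c' z := by intro z; simp [hDdef]
    -- the monochromatic edge uw forces a difference on {u, w}
    have hmono_uw : u ∈ D ∨ w ∈ D := by
      by_contra h
      push_neg at h
      obtain ⟨h1, h2⟩ := h
      rw [hmemD, not_not] at h1 h2
      exact hc'p huw (by rw [← h1, ← h2, hcu, hcw])
    have hmono_vx : v ∈ D ∨ x ∈ D := by
      by_contra h
      push_neg at h
      obtain ⟨h1, h2⟩ := h
      rw [hmemD, not_not] at h1 h2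
      exact hc'p hvx (by rw [← h1, ← h2, hcv, hcx])
    have hcardpos : 0 < D.card := by
      rcases hmono_uw with h | h
      · exact Finset.card_pos.mpr ⟨u, h⟩
      · exact Finset.card_pos.mpr ⟨w, h⟩
    have hlt' : recolorCount c c' < 3 := hlt
    have hcard12 : D.card = 1 ∨ D.card = 2 := by
      have : D.card = recolorCount c c' := rfl
      omega
    rcases hcard12 with h1 | h2
    · -- a single difference is impossible by the counting argument
      obtain ⟨p, hp⟩ := Finset.card_eq_one.mp h1
      have hpd : c p ≠ c' p := (hmemD p).mp (by rw [hp]; exact Finset.mem_singleton_self p)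
      have hoth : ∀ z, z ≠ p → z ≠ p → c z = c' z := by
        intro z hz _
        by_contra hne
        have := (hmemD z).mpr hne
        rw [hp, Finset.mem_singleton] at this
        exact hz this
      exact hpd (color_swap_aux hcnt hpd hoth).symm
    · -- exactly two differences: a swap, which cannot repair both mono edges
      obtain ⟨p, q, hpq, hPQ⟩ := Finset.card_eq_two.mp h2
      have hoth : ∀ z, z ≠ p → z ≠ q → c z = c' z := by
        intro z hzp hzq
        by_contra hne
        have := (hmemD z).mpr hne
        rw [hPQ] at this
        simp only [Finset.mem_insert, Finset.mem_singleton] at this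
        tauto
      have hdp : c p ≠ c' p := (hmemD p).mp (by rw [hPQ]; simp)
      have hdq : c q ≠ c' q := (hmemD q).mp (by rw [hPQ]; simp)
      have h1 : c' q = c p := color_swap_aux hcnt hdp hoth
      have h2' : c' p = c q := by
        have h := color_swap_aux (c := c') (c' := c)
          (fun k => (hcnt k).symm) (p := p) (q := q) (Ne.symm hdp)
          (fun z hz1 hz2 => (hoth z hz1 hz2).symm)
        exact h.symm
      -- pick the difference vertices on each mono edge
      obtain ⟨α, hαuw, hαD⟩ : ∃ α, (α = u ∨ α = w) ∧ α ∈ D := by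
        rcases hmono_uw with h | h
        · exact ⟨u, Or.inl rfl, h⟩
        · exact ⟨w, Or.inr rfl, h⟩
      obtain ⟨β, hβvx, hβD⟩ : ∃ β, (β = v ∨ β = x) ∧ β ∈ D := by
        rcases hmono_vx with h | h
        · exact ⟨v, Or.inl rfl, h⟩
        · exact ⟨x, Or.inr rfl, h⟩
      have hαβ : α ≠ β := by
        rcases hαuw with rfl | rfl <;> rcases hβvx with rfl | rfl
        · exact huvne
        · exact Ne.symm hxu
        · exact Ne.symm hvwne
        · exact Ne.symm hxw
      have hαPQ : α = p ∨ α = q := by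
        have := hαD; rw [hPQ] at this
        simpa using this
      have hβPQ : β = p ∨ β = q := by
        have := hβD; rw [hPQ] at this
        simpa using this
      have horient : (α = p ∧ β = q) ∨ (α = q ∧ β = p) := by
        rcases hαPQ with h | h <;> rcases hβPQ with h' | h'
        · exact absurd (h.trans h'.symm) hαβ
        · exact Or.inl ⟨h, h'⟩
        · exact Or.inr ⟨h, h'⟩
        · exact absurd (h.trans h'.symm) hαβ
      have hc'α : c' α = c β := by
        rcases horient with ⟨ha, hb⟩ | ⟨ha, hb⟩
        · rw [ha, hb, h2']
        · rw [ha, hb, h1]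
      have hc'β : c' β = c α := by
        rcases horient with ⟨ha, hb⟩ | ⟨ha, hb⟩
        · rw [ha, hb, h1]
        · rw [ha, hb, h2']
      have hoth' : ∀ z, z ≠ α → z ≠ β → c' z = c z := by
        intro z hz1 hz2
        rcases horient with ⟨ha, hb⟩ | ⟨ha, hb⟩
        · exact (hoth z (ha ▸ hz1) (hb ▸ hz2)).symm
        · exact (hoth z (hb ▸ hz2) (ha ▸ hz1)).symm
      -- in all four cases a triangle edge stays monochromatic
      rcases hαuw with hA | hA <;> rcases hβvx with hB | hB
      · -- α = u, β = v : edge vw is monochromatic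
        have hwα : w ≠ α := by rw [hA]; exact Ne.symm huwne
        have hwβ : w ≠ β := by rw [hB]; exact Ne.symm hvwne
        have hw : c' w = k₁ := by rw [hoth' w hwα hwβ, hcw]
        have hv : c' v = k₁ := by rw [← hB, hc'β, hA, hcu]
        exact hc'p hvw (hv.trans hw.symm)
      · -- α = u, β = x : edge uv is monochromatic
        have hvα : v ≠ α := by rw [hA]; exact Ne.symm huvne
        have hvβ : v ≠ β := by rw [hB]; exact hvxne
        have hv : c' v = k₂ := by rw [hoth' v hvα hvβ, hcv]
        have hu : c' u = k₂ := by rw [← hA, hc'α, hB, hcx]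
        exact hc'p huv (hu.trans hv.symm)
      · -- α = w, β = v : edge uv is monochromatic
        have huα : u ≠ α := by rw [hA]; exact huwne
        have huβ : u ≠ β := by rw [hB]; exact huvne
        have hu : c' u = k₁ := by rw [hoth' u huα huβ, hcu]
        have hv : c' v = k₁ := by rw [← hB, hc'β, hA, hcw]
        exact hc'p huv (hu.trans hv.symm)
      · -- α = w, β = x : edge vw is monochromatic
        have hvα : v ≠ α := by rw [hA]; exact hvwne
        have hvβ : v ≠ β := by rw [hB]; exact hvxne
        have hv : c' v = k₂ := by rw [hoth' v hvα hvβ, hcv]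
        have hw : c' w = k₂ := by rw [← hA, hc'α, hB, hcx]
        exact hc'p hvw (hv.trans hw.symm)
  -- conclude via the supremum
  have hmem : colVillainy G c ∈
      {n | ∃ f c, IsOptimalColoring G f ∧ IsPermutationOf c f ∧ colVillainy G c = n} :=
    ⟨f, c, hf, ⟨σ, rfl⟩, rfl⟩
  have hbdd : BddAbove
      {n | ∃ f c, IsOptimalColoring G f ∧ IsPermutationOf c f ∧ colVillainy G c = n} := by
    refine ⟨Fintype.card V, ?_⟩
    rintro n ⟨f', c', hf', ⟨σ', rfl⟩, rfl⟩
    have hmemS : recolorCount (f' ∘ σ') f' ∈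
        {n | ∃ c'', IsProperColoring G c'' ∧ SameColorCounts (f' ∘ σ') c'' ∧
          recolorCount (f' ∘ σ') c'' = n} :=
      ⟨f', hf'.1, sameColorCounts_comp_perm f' σ', rfl⟩
    exact le_trans (Nat.sInf_le hmemS) (Finset.card_filter_le _ _)
  exact le_trans hkey (le_csSup hbdd hmem)
end

section
/- Let G be a graph containing a matching of size at least 3. If G has a proper coloring using χ(G) colors in which at least three color classes have size at least 2, then B(G) ≥ 3. -/
open Finset

variable {V : Type*}

variable [Fintype V] [DecidableEq V]

/-- Any injective tuple can be mapped to any other injective tuple by a permutation. -/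
lemma exists_perm_map_aux {n : ℕ} (g h : Fin n → V) (hg : Function.Injective g)
    (hh : Function.Injective h) : ∃ σ : Equiv.Perm V, ∀ i, σ (g i) = h i := by
  classical
  let e : {x // x ∈ Set.range g} ≃ {x // x ∈ Set.range h} :=
    (Equiv.ofInjective g hg).symm.trans (Equiv.ofInjective h hh)
  refine ⟨e.extendSubtype, fun i => ?_⟩
  rw [Equiv.extendSubtype_apply_of_mem e (g i) ⟨i, rfl⟩]
  show ((Equiv.ofInjective h hh) ((Equiv.ofInjective g hg).symm ⟨g i, ⟨i, rfl⟩⟩) : V) = h i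
  rw [Equiv.ofInjective_symm_apply]
  rfl

lemma inj_of_card_six_aux (a₁ b₁ a₂ b₂ a₃ b₃ : V)
    (hdist : ({a₁, b₁, a₂, b₂, a₃, b₃} : Finset V).card = 6) :
    Function.Injective ![a₁, b₁, a₂, b₂, a₃, b₃] := by
  have himg : Finset.image ![a₁, b₁, a₂, b₂, a₃, b₃] univ = {a₁, b₁, a₂, b₂, a₃, b₃} := by
    ext x
    simp [Fin.exists_fin_succ, Matrix.cons_val_zero, Matrix.cons_val_succ, or_assoc, eq_comm]
  have hinj : Set.InjOn ![a₁, b₁, a₂, b₂, a₃, b₃] (univ : Finset (Fin 6)) := by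
    apply Finset.injOn_of_card_image_eq
    rw [himg, hdist]; rfl
  intro i j hij
  exact hinj (by simp) (by simp) hij

theorem villainy_ge_three_of_matching (G : SimpleGraph V)
    (a₁ b₁ a₂ b₂ a₃ b₃ : V)
    (hdist : ({a₁, b₁, a₂, b₂, a₃, b₃} : Finset V).card = 6)
    (h₁ : G.Adj a₁ b₁) (h₂ : G.Adj a₂ b₂) (h₃ : G.Adj a₃ b₃)
    (f : V → ℕ) (hf : IsOptimalColoring G f) (k₁ k₂ k₃ : ℕ)
    (h12 : k₁ ≠ k₂) (h13 : k₁ ≠ k₃) (h23 : k₂ ≠ k₃)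
    (hk₁ : 2 ≤ (univ.filter fun x => f x = k₁).card)
    (hk₂ : 2 ≤ (univ.filter fun x => f x = k₂).card)
    (hk₃ : 2 ≤ (univ.filter fun x => f x = k₃).card) :
    3 ≤ villainy G := by
  classical
  have hfp := hf.1
  -- pick two vertices of each color class
  obtain ⟨u₁, hu₁m, v₁, hv₁m, huv₁⟩ := Finset.one_lt_card.mp hk₁
  obtain ⟨u₂, hu₂m, v₂, hv₂m, huv₂⟩ := Finset.one_lt_card.mp hk₂
  obtain ⟨u₃, hu₃m, v₃, hv₃m, huv₃⟩ := Finset.one_lt_card.mp hk₃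
  simp only [mem_filter, mem_univ, true_and] at hu₁m hv₁m hu₂m hv₂m hu₃m hv₃m
  have key : ∀ x y : V, f x ≠ f y → x ≠ y := fun x y hxy h => hxy (h ▸ rfl)
  have n1 : u₁ ≠ u₂ := key _ _ (by rw [hu₁m, hu₂m]; exact h12)
  have n2 : u₁ ≠ v₂ := key _ _ (by rw [hu₁m, hv₂m]; exact h12)
  have n3 : u₁ ≠ u₃ := key _ _ (by rw [hu₁m, hu₃m]; exact h13)
  have n4 : u₁ ≠ v₃ := key _ _ (by rw [hu₁m, hv₃m]; exact h13)
  have n5 : v₁ ≠ u₂ := key _ _ (by rw [hv₁m, hu₂m]; exact h12)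
  have n6 : v₁ ≠ v₂ := key _ _ (by rw [hv₁m, hv₂m]; exact h12)
  have n7 : v₁ ≠ u₃ := key _ _ (by rw [hv₁m, hu₃m]; exact h13)
  have n8 : v₁ ≠ v₃ := key _ _ (by rw [hv₁m, hv₃m]; exact h13)
  have n9 : u₂ ≠ u₃ := key _ _ (by rw [hu₂m, hu₃m]; exact h23)
  have n10 : u₂ ≠ v₃ := key _ _ (by rw [hu₂m, hv₃m]; exact h23)
  have n11 : v₂ ≠ u₃ := key _ _ (by rw [hv₂m, hu₃m]; exact h23)
  have n12 : v₂ ≠ v₃ := key _ _ (by rw [hv₂m, hv₃m]; exact h23)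
  have hcard2 : ({u₁, v₁, u₂, v₂, u₃, v₃} : Finset V).card = 6 := by
    rw [card_insert_of_notMem (by simp [huv₁, n1, n2, n3, n4]),
        card_insert_of_notMem (by simp [n5, n6, n7, n8]),
        card_insert_of_notMem (by simp [huv₂, n9, n10]),
        card_insert_of_notMem (by simp [n11, n12]),
        card_insert_of_notMem (by simp [huv₃]),
        card_singleton]
  have hginj := inj_of_card_six_aux a₁ b₁ a₂ b₂ a₃ b₃ hdist
  have hhinj := inj_of_card_six_aux u₁ v₁ u₂ v₂ u₃ v₃ hcard2
  obtain ⟨σ, hσ⟩ := exists_perm_map_aux _ _ hginj hhinj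
  have sa₁ : σ a₁ = u₁ := hσ 0
  have sb₁ : σ b₁ = v₁ := hσ 1
  have sa₂ : σ a₂ = u₂ := hσ 2
  have sb₂ : σ b₂ = v₂ := hσ 3
  have sa₃ : σ a₃ = u₃ := hσ 4
  have sb₃ : σ b₃ = v₃ := hσ 5
  set c : V → ℕ := f ∘ σ with hc
  have hca₁ : c a₁ = c b₁ := by simp [hc, sa₁, sb₁, hu₁m, hv₁m]
  have hca₂ : c a₂ = c b₂ := by simp [hc, sa₂, sb₂, hu₂m, hv₂m]
  have hca₃ : c a₃ = c b₃ := by simp [hc, sa₃, sb₃, hu₃m, hv₃m]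
  -- every proper coloring differs from c in ≥ 3 places
  have hkey : ∀ c' : V → ℕ, IsProperColoring G c' → 3 ≤ recolorCount c c' := by
    intro c' hc'
    have pick : ∀ x y : V, G.Adj x y → c x = c y →
        ∃ w, (w = x ∨ w = y) ∧ c w ≠ c' w := by
      intro x y hxy hcxy
      by_cases hx : c x = c' x
      · refine ⟨y, Or.inr rfl, fun hy => ?_⟩
        exact hc' hxy (by rw [← hx, ← hy, hcxy])
      · exact ⟨x, Or.inl rfl, hx⟩
    obtain ⟨w₁, hw₁, hcw₁⟩ := pick _ _ h₁ hca₁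
    obtain ⟨w₂, hw₂, hcw₂⟩ := pick _ _ h₂ hca₂
    obtain ⟨w₃, hw₃, hcw₃⟩ := pick _ _ h₃ hca₃
    have m1 : a₁ ≠ a₂ := hginj.ne (show (0 : Fin 6) ≠ 2 by decide)
    have m2 : a₁ ≠ b₂ := hginj.ne (show (0 : Fin 6) ≠ 3 by decide)
    have m3 : a₁ ≠ a₃ := hginj.ne (show (0 : Fin 6) ≠ 4 by decide)
    have m4 : a₁ ≠ b₃ := hginj.ne (show (0 : Fin 6) ≠ 5 by decide)
    have m5 : b₁ ≠ a₂ := hginj.ne (show (1 : Fin 6) ≠ 2 by decide)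
    have m6 : b₁ ≠ b₂ := hginj.ne (show (1 : Fin 6) ≠ 3 by decide)
    have m7 : b₁ ≠ a₃ := hginj.ne (show (1 : Fin 6) ≠ 4 by decide)
    have m8 : b₁ ≠ b₃ := hginj.ne (show (1 : Fin 6) ≠ 5 by decide)
    have m9 : a₂ ≠ a₃ := hginj.ne (show (2 : Fin 6) ≠ 4 by decide)
    have m10 : a₂ ≠ b₃ := hginj.ne (show (2 : Fin 6) ≠ 5 by decide)
    have m11 : b₂ ≠ a₃ := hginj.ne (show (3 : Fin 6) ≠ 4 by decide)
    have m12 : b₂ ≠ b₃ := hginj.ne (show (3 : Fin 6) ≠ 5 by decide)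
    have w12 : w₁ ≠ w₂ := by
      rcases hw₁ with rfl | rfl <;> rcases hw₂ with rfl | rfl <;> assumption
    have w13 : w₁ ≠ w₃ := by
      rcases hw₁ with rfl | rfl <;> rcases hw₃ with rfl | rfl <;> assumption
    have w23 : w₂ ≠ w₃ := by
      rcases hw₂ with rfl | rfl <;> rcases hw₃ with rfl | rfl <;> assumption
    have hsub : ({w₁, w₂, w₃} : Finset V) ⊆ univ.filter fun v => c v ≠ c' v := by
      intro x hx
      simp only [mem_insert, mem_singleton] at hx
      rcases hx with rfl | rfl | rfl <;> simp [hcw₁, hcw₂, hcw₃]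
    have : ({w₁, w₂, w₃} : Finset V).card = 3 := by
      rw [card_insert_of_notMem (by simp [w12, w13]),
          card_insert_of_notMem (by simp [w23]), card_singleton]
    calc 3 = ({w₁, w₂, w₃} : Finset V).card := this.symm
      _ ≤ _ := Finset.card_le_card hsub
  -- colVillainy G c ≥ 3
  have hTne : ∃ n, (∃ c', IsProperColoring G c' ∧ SameColorCounts c c' ∧ recolorCount c c' = n) :=
    ⟨recolorCount c f, f, hfp, sameColorCounts_comp_perm f σ, rfl⟩
  have hcv : 3 ≤ colVillainy G c := by
    obtain ⟨c', hc'p, -, hrc⟩ := Nat.sInf_mem hTne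
    exact le_of_le_of_eq (hkey c' hc'p) hrc
  -- villainy ≥ 3
  have hmemS : colVillainy G c ∈
      {n | ∃ f c, IsOptimalColoring G f ∧ IsPermutationOf c f ∧ colVillainy G c = n} :=
    ⟨f, c, ⟨hfp, hf.2⟩, ⟨σ, rfl⟩, rfl⟩
  have hbdd : BddAbove
      {n | ∃ f c, IsOptimalColoring G f ∧ IsPermutationOf c f ∧ colVillainy G c = n} := by
    refine ⟨Fintype.card V, fun m hm => ?_⟩
    obtain ⟨f₀, c₀, hf₀, ⟨σ₀, rfl⟩, rfl⟩ := hm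
    have hmem : recolorCount (f₀ ∘ σ₀) f₀ ∈
        {n | ∃ c', IsProperColoring G c' ∧ SameColorCounts (f₀ ∘ σ₀) c' ∧
          recolorCount (f₀ ∘ σ₀) c' = n} :=
      ⟨f₀, hf₀.1, sameColorCounts_comp_perm f₀ σ₀, rfl⟩
    calc colVillainy G (f₀ ∘ σ₀) ≤ recolorCount (f₀ ∘ σ₀) f₀ := Nat.sInf_le hmem
      _ ≤ (univ : Finset V).card := Finset.card_filter_le _ _
      _ = Fintype.card V := Finset.card_univ
  exact hcv.trans (le_csSup hbdd hmemS)
end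

section
/- The villainy of the 5-cycle C_5 is 2. -/
open Finset

variable {V : Type*}

variable [Fintype V] [DecidableEq V]

/-! ### Auxiliary lemmas -/

def mySwap (i j v : Fin 5) : Fin 5 := if v = i then j else if v = j then i else v

lemma mySwap_eq (i j v : Fin 5) : Equiv.swap i j v = mySwap i j v := by
  simp [Equiv.swap_apply_def, mySwap]

set_option maxRecDepth 20000 in
set_option synthInstance.maxHeartbeats 1000000 in
set_option synthInstance.maxSize 2000 in
lemma key_swap : ∀ a b c d e : Fin 5,
    (¬(a=b∧a=c) ∧ ¬(a=b∧a=d) ∧ ¬(a=b∧a=e) ∧ ¬(a=c∧a=d) ∧ ¬(a=c∧a=e) ∧ ¬(a=d∧a=e) ∧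
     ¬(b=c∧b=d) ∧ ¬(b=c∧b=e) ∧ ¬(b=d∧b=e) ∧ ¬(c=d∧c=e)) →
    ∃ i j : Fin 5,
      (![a,b,c,d,e] (mySwap i j 0) ≠ ![a,b,c,d,e] (mySwap i j 1)) ∧
      (![a,b,c,d,e] (mySwap i j 1) ≠ ![a,b,c,d,e] (mySwap i j 2)) ∧
      (![a,b,c,d,e] (mySwap i j 2) ≠ ![a,b,c,d,e] (mySwap i j 3)) ∧
      (![a,b,c,d,e] (mySwap i j 3) ≠ ![a,b,c,d,e] (mySwap i j 4)) ∧
      (![a,b,c,d,e] (mySwap i j 4) ≠ ![a,b,c,d,e] (mySwap i j 0)) := by decide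

lemma indep2 : ∀ s : Finset (Fin 5),
    (∀ u ∈ s, ∀ v ∈ s, ¬ (SimpleGraph.cycleGraph 5).Adj u v) → s.card ≤ 2 := by decide

lemma adj_cases : ∀ u v : Fin 5, (SimpleGraph.cycleGraph 5).Adj u v →
    (u=0∧v=1)∨(u=1∧v=2)∨(u=2∧v=3)∨(u=3∧v=4)∨(u=4∧v=0)∨
    (u=1∧v=0)∨(u=2∧v=1)∨(u=3∧v=2)∨(u=4∧v=3)∨(u=0∧v=4) := by decide

lemma sameCounts_comp {V : Type*} [Fintype V] [DecidableEq V] (g : V → ℕ) (σ : Equiv.Perm V) :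
    SameColorCounts (g ∘ σ) g := by
  intro k
  apply Finset.card_bij (fun v _ => σ v)
  · intro a ha
    simp only [Finset.mem_filter, Finset.mem_univ, true_and, Function.comp] at *
    exact ha
  · intro a _ b _ h
    exact σ.injective h
  · intro b hb
    refine ⟨σ.symm b, ?_, by simp⟩
    simp only [Finset.mem_filter, Finset.mem_univ, true_and, Function.comp] at *
    simpa using hb

lemma sameCounts_symm {V : Type*} [Fintype V] [DecidableEq V] {c c' : V → ℕ}
    (h : SameColorCounts c c') : SameColorCounts c' c := fun k => (h k).symm

lemma recolor_ne_one {V : Type*} [Fintype V] [DecidableEq V] {c c' : V → ℕ}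
    (h : SameColorCounts c c') : recolorCount c c' ≠ 1 := by
  intro h1
  obtain ⟨v, hv⟩ := Finset.card_eq_one.mp h1
  have hmem : ∀ u : V, u ∈ (univ.filter fun u => c u ≠ c' u) ↔ u = v := by
    intro u; rw [hv]; exact Finset.mem_singleton
  have hvne : c v ≠ c' v := by
    have := (hmem v).mpr rfl
    exact (Finset.mem_filter.mp this).2
  have key : ∀ u : V, u ≠ v → c u = c' u := by
    intro u hu
    by_contra hne
    exact hu ((hmem u).mp (Finset.mem_filter.mpr ⟨Finset.mem_univ u, hne⟩))
  have heq : (univ.filter fun u => c' u = c v) = (univ.filter fun u => c u = c v).erase v := by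
    ext u
    simp only [Finset.mem_filter, Finset.mem_univ, true_and, Finset.mem_erase]
    constructor
    · intro hcu
      have hne : u ≠ v := by rintro rfl; exact hvne hcu.symm
      exact ⟨hne, (key u hne) ▸ hcu⟩
    · rintro ⟨hne, hcu⟩
      rw [← key u hne]; exact hcu
  have hvmem : v ∈ univ.filter fun u => c u = c v :=
    Finset.mem_filter.mpr ⟨Finset.mem_univ v, rfl⟩
  have hcard := h (c v)
  rw [heq] at hcard
  rw [Finset.card_erase_of_mem hvmem] at hcard
  have hpos : 0 < (univ.filter fun u => c u = c v).card :=
    Finset.card_pos.mpr ⟨v, Finset.mem_filter.mpr ⟨Finset.mem_univ v, rfl⟩⟩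
  omega

lemma recolor_zero {V : Type*} [Fintype V] [DecidableEq V] {c c' : V → ℕ}
    (h : recolorCount c c' = 0) : ∀ v, c v = c' v := by
  intro v
  by_contra hne
  have : v ∈ (univ.filter fun u => c u ≠ c' u) := Finset.mem_filter.mpr ⟨Finset.mem_univ v, hne⟩
  rw [Finset.card_eq_zero.mp h] at this
  exact absurd this (Finset.notMem_empty v)

/-- Canonical representative of the color class of `v`. -/
def normC (c : Fin 5 → ℕ) (v : Fin 5) : Fin 5 :=
  (univ.filter fun u => c u = c v).min' ⟨v, by simp⟩

lemma normC_eq_iff (c : Fin 5 → ℕ) (u v : Fin 5) : normC c u = normC c v ↔ c u = c v := by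
  constructor
  · intro h
    have hu : c (normC c u) = c u := by
      have := Finset.min'_mem (univ.filter fun w => c w = c u) ⟨u, by simp⟩
      exact (Finset.mem_filter.mp this).2
    have hv : c (normC c v) = c v := by
      have := Finset.min'_mem (univ.filter fun w => c w = c v) ⟨v, by simp⟩
      exact (Finset.mem_filter.mp this).2
    rw [← hu, h, hv]
  · intro h
    have hset : (univ.filter fun w => c w = c u) = (univ.filter fun w => c w = c v) := by
      ext w; simp [h]
    unfold normC
    congr 1
lemma three_le {c : Fin 5 → ℕ} {u v w : Fin 5} (huv : u ≠ v) (huw : u ≠ w) (hvw : v ≠ w)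
    (h1 : c v = c u) (h2 : c w = c u) : 3 ≤ (univ.filter fun x => c x = c u).card := by
  have hsub : ({u, v, w} : Finset (Fin 5)) ⊆ univ.filter fun x => c x = c u := by
    intro x hx
    simp only [Finset.mem_insert, Finset.mem_singleton] at hx
    rcases hx with rfl | rfl | rfl <;> simp [h1, h2]
  have h3 : ({u, v, w} : Finset (Fin 5)).card = 3 :=
    Finset.card_eq_three.mpr ⟨u, v, w, huv, huw, hvw, rfl⟩
  calc 3 = ({u, v, w} : Finset (Fin 5)).card := h3.symm
    _ ≤ _ := Finset.card_le_card hsub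

lemma conj_helper {c : Fin 5 → ℕ} (hcl : ∀ k, (univ.filter fun v => c v = k).card ≤ 2)
    {p q r : Fin 5} (hpq : p ≠ q) (hpr : p ≠ r) (hqr : q ≠ r) :
    ¬(normC c p = normC c q ∧ normC c p = normC c r) := by
  rintro ⟨h1, h2⟩
  rw [normC_eq_iff] at h1 h2
  have := three_le hpq hpr hqr h1.symm h2.symm
  have := hcl (c p)
  omega

lemma step_ne {c : Fin 5 → ℕ} {i j p q : Fin 5}
    (h : ![normC c 0, normC c 1, normC c 2, normC c 3, normC c 4] (mySwap i j p) ≠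
         ![normC c 0, normC c 1, normC c 2, normC c 3, normC c 4] (mySwap i j q)) :
    c (Equiv.swap i j p) ≠ c (Equiv.swap i j q) := by
  have hm : ∀ x : Fin 5, ![normC c 0, normC c 1, normC c 2, normC c 3, normC c 4] x = normC c x := by
    intro x; fin_cases x <;> rfl
  rw [hm, hm, ← mySwap_eq, ← mySwap_eq] at h
  intro heq
  exact h ((normC_eq_iff c _ _).mpr heq)

lemma colVillainy_le_two (f : Fin 5 → ℕ) (σ : Equiv.Perm (Fin 5))
    (hf : IsProperColoring (SimpleGraph.cycleGraph 5) f) :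
    colVillainy (SimpleGraph.cycleGraph 5) (f ∘ σ) ≤ 2 := by
  set c : Fin 5 → ℕ := f ∘ σ with hc
  have hcount : SameColorCounts c f := sameCounts_comp f σ
  have hcl : ∀ k, (univ.filter fun v => c v = k).card ≤ 2 := by
    intro k
    rw [hcount k]
    apply indep2
    intro u hu v hv hadj
    simp only [Finset.mem_filter, Finset.mem_univ, true_and] at hu hv
    exact hf hadj (hu.trans hv.symm)
  obtain ⟨i, j, h01, h12, h23, h34, h40⟩ :=
    key_swap (normC c 0) (normC c 1) (normC c 2) (normC c 3) (normC c 4)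
      ⟨conj_helper hcl (by decide) (by decide) (by decide),
       conj_helper hcl (by decide) (by decide) (by decide),
       conj_helper hcl (by decide) (by decide) (by decide),
       conj_helper hcl (by decide) (by decide) (by decide),
       conj_helper hcl (by decide) (by decide) (by decide),
       conj_helper hcl (by decide) (by decide) (by decide),
       conj_helper hcl (by decide) (by decide) (by decide),
       conj_helper hcl (by decide) (by decide) (by decide),
       conj_helper hcl (by decide) (by decide) (by decide),
       conj_helper hcl (by decide) (by decide) (by decide)⟩
  have hproper : IsProperColoring (SimpleGraph.cycleGraph 5) (c ∘ Equiv.swap i j) := by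
    intro u v hadj
    rcases adj_cases u v hadj with ⟨rfl,rfl⟩|⟨rfl,rfl⟩|⟨rfl,rfl⟩|⟨rfl,rfl⟩|⟨rfl,rfl⟩|
      ⟨rfl,rfl⟩|⟨rfl,rfl⟩|⟨rfl,rfl⟩|⟨rfl,rfl⟩|⟨rfl,rfl⟩
    · exact step_ne h01
    · exact step_ne h12
    · exact step_ne h23
    · exact step_ne h34
    · exact step_ne h40
    · exact (step_ne h01).symm
    · exact (step_ne h12).symm
    · exact (step_ne h23).symm
    · exact (step_ne h34).symm
    · exact (step_ne h40).symm
  have hcounts : SameColorCounts c (c ∘ Equiv.swap i j) :=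
    sameCounts_symm (sameCounts_comp c (Equiv.swap i j))
  have hmem : recolorCount c (c ∘ Equiv.swap i j) ∈
      {n | ∃ c', IsProperColoring (SimpleGraph.cycleGraph 5) c' ∧ SameColorCounts c c' ∧
        recolorCount c c' = n} :=
    ⟨c ∘ Equiv.swap i j, hproper, hcounts, rfl⟩
  have hle2 : recolorCount c (c ∘ Equiv.swap i j) ≤ 2 := by
    have hsub : (univ.filter fun v => c v ≠ (c ∘ Equiv.swap i j) v) ⊆ {i, j} := by
      intro v hv
      simp only [Finset.mem_filter, Finset.mem_univ, true_and, Function.comp] at hv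
      simp only [Finset.mem_insert, Finset.mem_singleton]
      by_contra hcon
      push_neg at hcon
      rw [Equiv.swap_apply_of_ne_of_ne hcon.1 hcon.2] at hv
      exact hv rfl
    calc recolorCount c (c ∘ Equiv.swap i j) ≤ ({i, j} : Finset (Fin 5)).card :=
          Finset.card_le_card hsub
      _ ≤ 2 := by
          apply le_trans (Finset.card_insert_le i {j})
          simp
  exact le_trans (Nat.sInf_le hmem) hle2

lemma chromNum_C5 : chromNum (SimpleGraph.cycleGraph 5) = 3 := by
  have h3 : (SimpleGraph.cycleGraph 5).Colorable 3 :=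
    ⟨SimpleGraph.Coloring.mk (![0, 1, 0, 1, 2] : Fin 5 → Fin 3) (by decide)⟩
  have h2 : ¬ (SimpleGraph.cycleGraph 5).Colorable 2 := by
    rintro ⟨C⟩
    have key2 : ∀ g : Fin 5 → Fin 2, ∃ u v : Fin 5,
        (SimpleGraph.cycleGraph 5).Adj u v ∧ g u = g v := by decide
    obtain ⟨u, v, hadj, he⟩ := key2 (fun v => C v)
    exact C.valid hadj he
  have hle : (SimpleGraph.cycleGraph 5).chromaticNumber ≤ (3 : ℕ) := h3.chromaticNumber_le
  have hnle : ¬ (SimpleGraph.cycleGraph 5).chromaticNumber ≤ ((2 : ℕ) : ℕ∞) := by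
    rw [SimpleGraph.chromaticNumber_le_iff_colorable]
    exact h2
  have hlt : ((2 : ℕ) : ℕ∞) < (SimpleGraph.cycleGraph 5).chromaticNumber := lt_of_not_ge hnle
  have hge : ((3 : ℕ) : ℕ∞) ≤ (SimpleGraph.cycleGraph 5).chromaticNumber := by
    have h := (ENat.add_one_le_iff (m := ((2 : ℕ) : ℕ∞)) (by simp)).mpr hlt
    convert h using 2
    norm_num
  have heq : (SimpleGraph.cycleGraph 5).chromaticNumber = ((3 : ℕ) : ℕ∞) :=
    le_antisymm hle hge
  unfold chromNum
  rw [heq]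
  rfl

def f0 : Fin 5 → ℕ := ![0, 1, 0, 1, 2]
def c0 : Fin 5 → ℕ := ![1, 0, 0, 1, 2]

lemma c0_eq : c0 = f0 ∘ Equiv.swap 0 1 := by
  funext v
  fin_cases v <;> simp [c0, f0, Equiv.swap_apply_def]

lemma f0_opt : IsOptimalColoring (SimpleGraph.cycleGraph 5) f0 := by
  constructor
  · intro u v hadj
    revert hadj
    revert u v
    decide
  · rw [chromNum_C5]
    decide

lemma colVillainy_c0 : colVillainy (SimpleGraph.cycleGraph 5) c0 = 2 := by
  have hmem : (2 : ℕ) ∈ {n | ∃ c', IsProperColoring (SimpleGraph.cycleGraph 5) c' ∧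
      SameColorCounts c0 c' ∧ recolorCount c0 c' = n} := by
    refine ⟨f0, f0_opt.1, ?_, ?_⟩
    · rw [c0_eq]; exact sameCounts_comp f0 (Equiv.swap 0 1)
    · decide
  apply le_antisymm
  · exact Nat.sInf_le hmem
  · apply le_csInf ⟨2, hmem⟩
    rintro n ⟨c', hp, hs, hr⟩
    have h0 : n ≠ 0 := by
      rintro rfl
      have hall := recolor_zero hr
      have hadj : (SimpleGraph.cycleGraph 5).Adj 1 2 := by decide
      have h12 : c' 1 = c' 2 := by
        rw [← hall 1, ← hall 2]
        rfl
      exact hp hadj h12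
    have h1 : n ≠ 1 := by
      rintro rfl
      exact recolor_ne_one hs hr
    omega

theorem villainy_C5 : villainy (SimpleGraph.cycleGraph 5) = 2 := by
  have hmem : (2 : ℕ) ∈ {n | ∃ f c, IsOptimalColoring (SimpleGraph.cycleGraph 5) f ∧
      IsPermutationOf c f ∧ colVillainy (SimpleGraph.cycleGraph 5) c = n} :=
    ⟨f0, c0, f0_opt, ⟨Equiv.swap 0 1, c0_eq⟩, colVillainy_c0⟩
  have hbdd : ∀ n ∈ {n | ∃ f c, IsOptimalColoring (SimpleGraph.cycleGraph 5) f ∧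
      IsPermutationOf c f ∧ colVillainy (SimpleGraph.cycleGraph 5) c = n}, n ≤ 2 := by
    rintro n ⟨f, c, hopt, ⟨σ, rfl⟩, rfl⟩
    exact colVillainy_le_two f σ hopt.1
  unfold villainy
  exact le_antisymm (csSup_le ⟨2, hmem⟩ hbdd) (le_csSup ⟨2, hbdd⟩ hmem)
end
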